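/- If a unitary U saturates the block-wise fidelity bound Tr[A U ρ U†] = Σ_n Σ_{m=1}^{d_n} w_{n,m} for a block-diagonal density matrix ρ with strictly decreasing eigenvalues within each block, then U maps the eigenvector of ρ with m-th largest eigenvalue in block n into the +1-eigenspace of A restricted to H_n for every m ≤ d_n; consequently the same U also saturates the bound for any other block-diagonal density matrix ρ' whose eigenvectors coincide with those of ρ with the same ordering of eigenvalues. -/

import Mathlib

open Matrix ComplexOrder

set_option linter.unusedSectionVars false
set_option maxHeartbeats 1000000

variable {ι : Type*} [Fintype ι] [DecidableEq ι]

lemma mul_vecMulVec' (M : Matrix ι ι ℂ) (x y : ι → ℂ) :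
    M * vecMulVec x y = vecMulVec (M *ᵥ x) y := by
  ext a b
  simp [Matrix.mul_apply, vecMulVec_apply, mulVec, dotProduct, Finset.sum_mul, mul_assoc]

lemma vecMulVec_mul' (M : Matrix ι ι ℂ) (x y : ι → ℂ) :
    vecMulVec x y * M = vecMulVec x (y ᵥ* M) := by
  ext a b
  simp [Matrix.mul_apply, vecMulVec_apply, vecMul, dotProduct, Finset.mul_sum, mul_assoc]

lemma trace_mul_vecMulVec (A : Matrix ι ι ℂ) (u : ι → ℂ) :
    (A * vecMulVec u (star u)).trace = star u ⬝ᵥ (A *ᵥ u) := by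
  simp only [Matrix.trace, Matrix.diag, Matrix.mul_apply, vecMulVec_apply, dotProduct, mulVec,
    Pi.star_apply, Finset.mul_sum]
  refine Finset.sum_congr rfl fun a _ => Finset.sum_congr rfl fun b _ => by ring

lemma trace_formula (A U : Matrix ι ι ℂ) (c : ι → ℂ) (e : ι → ι → ℂ) :
    (A * (U * (∑ i, c i • vecMulVec (e i) (star (e i))) * Uᴴ)).trace
      = ∑ i, c i * (star (U *ᵥ e i) ⬝ᵥ (A *ᵥ (U *ᵥ e i))) := by
  rw [Finset.mul_sum, Finset.sum_mul, Finset.mul_sum, Matrix.trace_sum]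
  refine Finset.sum_congr rfl fun i _ => ?_
  rw [Matrix.mul_smul, Matrix.smul_mul, Matrix.mul_smul, Matrix.trace_smul, smul_eq_mul]
  congr 1
  rw [mul_vecMulVec', vecMulVec_mul', ← Matrix.star_mulVec, trace_mul_vecMulVec]

set_option linter.unusedSectionVars false

lemma eig_zero_or_one {k : ℕ} {B : Matrix (Fin k) (Fin k) ℂ} (hB2 : B * B = B)
    (hBh : B.IsHermitian) (j : Fin k) : hBh.eigenvalues j = 0 ∨ hBh.eigenvalues j = 1 := by
  set lam := hBh.eigenvalues j with hlam
  have h1 := hBh.mulVec_eigenvectorBasis j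
  have h2 : B *ᵥ (B *ᵥ ⇑(hBh.eigenvectorBasis j)) = lam • lam • ⇑(hBh.eigenvectorBasis j) := by
    rw [h1, Matrix.mulVec_smul, h1]
  have h3 : B *ᵥ (B *ᵥ ⇑(hBh.eigenvectorBasis j)) = lam • ⇑(hBh.eigenvectorBasis j) := by
    rw [Matrix.mulVec_mulVec, hB2, h1]
  have hb : (⇑(hBh.eigenvectorBasis j) : Fin k → ℂ) ≠ 0 := by
    intro h
    have hne := hBh.eigenvectorBasis.toBasis.ne_zero j
    rw [OrthonormalBasis.coe_toBasis] at hne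
    exact hne (by ext a; exact congrFun h a)
  have h4 : (lam * lam - lam) • (⇑(hBh.eigenvectorBasis j) : Fin k → ℂ) = 0 := by
    rw [sub_smul, ← smul_smul]
    rw [h2.symm.trans h3]
    simp
  rcases smul_eq_zero.mp h4 with h | h
  · have : lam * lam = lam := by linarith [sub_eq_zero.mp h]
    have : lam * (lam - 1) = 0 := by ring_nf; linarith
    rcases mul_eq_zero.mp this with h' | h'
    · exact Or.inl h'
    · exact Or.inr (by linarith [sub_eq_zero.mp h'])
  · exact absurd h hb

lemma trace_proj_eq_rank {k : ℕ} (B : Matrix (Fin k) (Fin k) ℂ) (hB2 : B * B = B)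
    (hBh : B.IsHermitian) : B.trace = (B.rank : ℂ) := by
  classical
  have hV := (hBh.eigenvectorUnitary).2
  conv_lhs => rw [hBh.spectral_theorem]
  rw [Unitary.conjStarAlgAut_apply]
  rw [Matrix.trace_mul_comm, ← Matrix.mul_assoc]
  rw [(Unitary.mem_iff.mp hV).1, one_mul, Matrix.trace_diagonal]
  rw [hBh.rank_eq_card_non_zero_eigs, Fintype.card_subtype]
  rw [← Finset.sum_filter_add_sum_filter_not Finset.univ (fun j => hBh.eigenvalues j ≠ 0)]
  have h1 : ∀ j ∈ Finset.univ.filter (fun j => ¬ hBh.eigenvalues j ≠ 0),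
      (RCLike.ofReal ∘ hBh.eigenvalues) j = (0 : ℂ) := by
    intro j hj
    simp only [Finset.mem_filter, not_not] at hj
    simp [hj.2]
  rw [Finset.sum_eq_zero h1, add_zero]
  have h2 : ∀ j ∈ Finset.univ.filter (fun j => hBh.eigenvalues j ≠ 0),
      (RCLike.ofReal ∘ hBh.eigenvalues) j = (1 : ℂ) := by
    intro j hj
    simp only [Finset.mem_filter] at hj
    rcases eig_zero_or_one hB2 hBh j with h | h
    · exact absurd h hj.2
    · simp [h]
  rw [Finset.sum_congr rfl h2, Finset.sum_const, nsmul_eq_mul, mul_one]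

lemma card_filter_lt_fin {k dk : ℕ} (hdk : dk ≤ k) :
    (Finset.univ.filter (fun m : Fin k => (m : ℕ) < dk)).card = dk := by
  have : Finset.univ.filter (fun m : Fin k => (m : ℕ) < dk)
      = Finset.map (Fin.castLEEmb hdk) Finset.univ := by
    ext m
    simp only [Finset.mem_filter, Finset.mem_univ, true_and, Finset.mem_map,
      Fin.castLEEmb_apply]
    constructor
    · intro h; exact ⟨⟨m, h⟩, rfl⟩
    · rintro ⟨j, rfl⟩; exact j.2
  rw [this, Finset.card_map, Finset.card_univ, Fintype.card_fin]

lemma block_core {k dk : ℕ} (w F : Fin k → ℝ) (t : ℝ)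
    (ht1 : ∀ m : Fin k, (m : ℕ) < dk → t < w m)
    (ht2 : ∀ m : Fin k, dk ≤ (m : ℕ) → w m < t)
    (hF0 : ∀ m, 0 ≤ F m) (hF1 : ∀ m, F m ≤ 1)
    (hFs : ∑ m, F m = (dk : ℝ)) (hdk : dk ≤ k) :
    (∑ m, w m * F m ≤ ∑ m ∈ Finset.univ.filter (fun m : Fin k => (m : ℕ) < dk), w m) ∧
    (∑ m, w m * F m = ∑ m ∈ Finset.univ.filter (fun m : Fin k => (m : ℕ) < dk), w m →
      ∀ m : Fin k, F m = if (m : ℕ) < dk then 1 else 0) := by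
  classical
  set P := Finset.univ.filter (fun m : Fin k => (m : ℕ) < dk) with hP
  set Q := Finset.univ.filter (fun m : Fin k => ¬ (m : ℕ) < dk) with hQ
  have hcard : (P.card : ℝ) = dk := by rw [card_filter_lt_fin hdk]
  have key : ∑ m ∈ P, w m - ∑ m, w m * F m
      = ∑ m ∈ P, (w m - t) * (1 - F m) + ∑ m ∈ Q, (t - w m) * F m := by
    have hsplit1 : ∑ m, w m * F m = ∑ m ∈ P, w m * F m + ∑ m ∈ Q, w m * F m :=
      (Finset.sum_filter_add_sum_filter_not _ _ _).symm
    have hsplit2 : (dk : ℝ) = ∑ m ∈ P, F m + ∑ m ∈ Q, F m := by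
      rw [Finset.sum_filter_add_sum_filter_not, hFs]
    have e1 : ∑ m ∈ P, (w m - t) * (1 - F m)
        = ∑ m ∈ P, w m - t * P.card - ∑ m ∈ P, w m * F m + t * ∑ m ∈ P, F m := by
      rw [Finset.sum_congr rfl (fun m _ => by ring :
        ∀ m ∈ P, (w m - t) * (1 - F m) = w m - t - w m * F m + t * F m)]
      rw [Finset.sum_add_distrib, Finset.sum_sub_distrib, Finset.sum_sub_distrib,
        Finset.sum_const, ← Finset.mul_sum]
      push_cast
      ring
    have e2 : ∑ m ∈ Q, (t - w m) * F m = t * ∑ m ∈ Q, F m - ∑ m ∈ Q, w m * F m := by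
      rw [Finset.sum_congr rfl (fun m _ => by ring :
        ∀ m ∈ Q, (t - w m) * F m = t * F m - w m * F m)]
      rw [Finset.sum_sub_distrib, ← Finset.mul_sum]
    rw [e1, e2, hsplit1, hcard]
    rw [hsplit2]
    ring
  have hnn1 : ∀ m ∈ P, 0 ≤ (w m - t) * (1 - F m) := by
    intro m hm
    have hmlt : (m : ℕ) < dk := (Finset.mem_filter.mp hm).2
    have := ht1 m hmlt
    have := hF1 m
    nlinarith
  have hnn2 : ∀ m ∈ Q, 0 ≤ (t - w m) * F m := by
    intro m hm
    have hmge : ¬ (m : ℕ) < dk := (Finset.mem_filter.mp hm).2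
    have := ht2 m (le_of_not_gt hmge)
    have := hF0 m
    nlinarith
  constructor
  · have h1 := Finset.sum_nonneg hnn1
    have h2 := Finset.sum_nonneg hnn2
    linarith
  · intro heq m
    have hz : ∑ m ∈ P, (w m - t) * (1 - F m) + ∑ m ∈ Q, (t - w m) * F m = 0 := by
      rw [← key]; linarith
    have h1 := Finset.sum_nonneg hnn1
    have h2 := Finset.sum_nonneg hnn2
    have hz1 : ∑ m ∈ P, (w m - t) * (1 - F m) = 0 := by linarith
    have hz2 : ∑ m ∈ Q, (t - w m) * F m = 0 := by linarith
    by_cases hm : (m : ℕ) < dk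
    · rw [if_pos hm]
      have hmem : m ∈ P := Finset.mem_filter.mpr ⟨Finset.mem_univ m, hm⟩
      have := (Finset.sum_eq_zero_iff_of_nonneg hnn1).mp hz1 m hmem
      have ht := ht1 m hm
      have h0 := mul_eq_zero.mp this
      rcases h0 with h | h
      · linarith
      · linarith [sub_eq_zero.mp h]
    · rw [if_neg hm]
      have hmem : m ∈ Q := Finset.mem_filter.mpr ⟨Finset.mem_univ m, hm⟩
      have := (Finset.sum_eq_zero_iff_of_nonneg hnn2).mp hz2 m hmem
      have ht := ht2 m (le_of_not_gt hm)
      rcases mul_eq_zero.mp this with h | h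
      · linarith
      · exact h

lemma block_main {k dk : ℕ} (w F : Fin k → ℝ) (hw : StrictAnti w)
    (hF0 : ∀ m, 0 ≤ F m) (hF1 : ∀ m, F m ≤ 1)
    (hFs : ∑ m, F m = (dk : ℝ)) :
    (∑ m, w m * F m ≤ ∑ m ∈ Finset.univ.filter (fun m : Fin k => (m : ℕ) < dk), w m) ∧
    (∑ m, w m * F m = ∑ m ∈ Finset.univ.filter (fun m : Fin k => (m : ℕ) < dk), w m →
      ∀ m : Fin k, F m = if (m : ℕ) < dk then 1 else 0) := by
  classical
  have hdk : dk ≤ k := by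
    have h1 : (dk : ℝ) ≤ (k : ℝ) := by
      rw [← hFs]
      calc ∑ m, F m ≤ ∑ _m : Fin k, (1 : ℝ) := Finset.sum_le_sum (fun m _ => hF1 m)
        _ = k := by simp
    exact_mod_cast h1
  rcases Nat.eq_zero_or_pos k with hk | hk
  · subst hk
    interval_cases dk
    constructor
    · simp
    · intro _ m; exact m.elim0
  rcases Nat.eq_zero_or_pos dk with hd0 | hd0
  · subst hd0
    refine block_core w F (w ⟨0, hk⟩ + 1) (fun m hm => absurd hm (by omega)) ?_ hF0 hF1 hFs (by omega)
    intro m _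
    have : w m ≤ w ⟨0, hk⟩ := hw.antitone (by simp [Fin.le_def])
    linarith
  rcases eq_or_lt_of_le hdk with hdkk | hdkk
  · subst hdkk
    refine block_core w F (w ⟨dk - 1, by omega⟩ - 1) ?_ (fun m hm => absurd m.2 (by omega)) hF0 hF1 hFs le_rfl
    intro m _
    have : w ⟨dk - 1, by omega⟩ ≤ w m := hw.antitone (by simp [Fin.le_def]; omega)
    linarith
  · refine block_core w F ((w ⟨dk - 1, by omega⟩ + w ⟨dk, hdkk⟩) / 2) ?_ ?_ hF0 hF1 hFs hdk
    · intro m hm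
      have h1 : w ⟨dk - 1, by omega⟩ ≤ w m := hw.antitone (by simp [Fin.le_def]; omega)
      have h2 : w ⟨dk, hdkk⟩ < w ⟨dk - 1, by omega⟩ := hw (by simp [Fin.lt_def]; omega)
      linarith
    · intro m hm
      have h1 : w m ≤ w ⟨dk, hdkk⟩ := hw.antitone (by simp [Fin.le_def]; omega)
      have h2 : w ⟨dk, hdkk⟩ < w ⟨dk - 1, by omega⟩ := hw (by simp [Fin.lt_def]; omega)
      linarith

lemma sum_sigma_eq_block {γ : Type*} [AddCommMonoid γ] {α : Type*} [Fintype α] [DecidableEq α]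
    {β : α → Type*} [∀ a, Fintype (β a)]
    (g : ((a : α) × β a) → γ) (n : α) (hg : ∀ i : (a : α) × β a, i.1 ≠ n → g i = 0) :
    ∑ i, g i = ∑ m : β n, g ⟨n, m⟩ := by
  rw [← Finset.univ_sigma_univ, Finset.sum_sigma]
  exact Finset.sum_eq_single n
    (fun p _ hp => Finset.sum_eq_zero fun c _ => hg ⟨p, c⟩ hp) (by simp)


lemma fidelity_core {N : ℕ} {M : Fin (N + 1) → ℕ} (d : Fin (N + 1) → ℕ)
    (f : ((n : Fin (N + 1)) × Fin (M n)) → ℂ)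
    (w : (n : Fin (N + 1)) → Fin (M n) → ℝ)
    (hstrict : ∀ n, StrictAnti (w n))
    (hf0 : ∀ i, 0 ≤ f i) (hf1 : ∀ i, (f i).re ≤ 1)
    (hfsum : ∀ n, ∑ m : Fin (M n), f ⟨n, m⟩ = (d n : ℂ))
    (hsat' : ∑ i : (n : Fin (N + 1)) × Fin (M n), (w i.1 i.2 : ℂ) * f i =
      ((∑ n : Fin (N + 1),
        ∑ m ∈ Finset.univ.filter (fun m : Fin (M n) => (m : ℕ) < d n), w n m : ℝ) : ℂ)) :
    ∀ i : (n : Fin (N + 1)) × Fin (M n), f i = if (i.2 : ℕ) < d i.1 then 1 else 0 := by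
  classical
  set F : (n : Fin (N + 1)) → Fin (M n) → ℝ := fun n m => (f ⟨n, m⟩).re with hF
  have him : ∀ i, (f i).im = 0 := fun i => ((Complex.nonneg_iff.mp (hf0 i)).2).symm
  have hfre : ∀ i, f i = ((f i).re : ℂ) := fun i => by
    apply Complex.ext <;> simp [him i]
  have hF0 : ∀ n m, 0 ≤ F n m := fun n m => (Complex.nonneg_iff.mp (hf0 ⟨n, m⟩)).1
  have hF1 : ∀ n m, F n m ≤ 1 := fun n m => hf1 ⟨n, m⟩
  have hFsum : ∀ n, ∑ m, F n m = (d n : ℝ) := by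
    intro n
    have := congrArg Complex.re (hfsum n)
    simpa [Complex.re_sum] using this
  have hsum_eq : ∑ n, ∑ m, w n m * F n m
      = ∑ n, ∑ m ∈ Finset.univ.filter (fun m : Fin (M n) => (m : ℕ) < d n), w n m := by
    have h2 : ((∑ i : (n : Fin (N + 1)) × Fin (M n), w i.1 i.2 * F i.1 i.2 : ℝ) : ℂ)
        = ∑ i, (w i.1 i.2 : ℂ) * f i := by
      push_cast
      exact Finset.sum_congr rfl fun i _ => by rw [hfre i]
    have h3 : (∑ i : (n : Fin (N + 1)) × Fin (M n), w i.1 i.2 * F i.1 i.2 : ℝ)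
        = ∑ n, ∑ m ∈ Finset.univ.filter (fun m : Fin (M n) => (m : ℕ) < d n), w n m := by
      exact_mod_cast h2.trans hsat'
    rw [← h3, ← Finset.univ_sigma_univ, Finset.sum_sigma]
  have hineq := fun n => (block_main (w n) (F n) (hstrict n) (hF0 n) (hF1 n) (hFsum n)).1
  have hslack : ∑ n, (∑ m ∈ Finset.univ.filter (fun m : Fin (M n) => (m : ℕ) < d n), w n m
      - ∑ m, w n m * F n m) = 0 := by
    rw [Finset.sum_sub_distrib, hsum_eq, sub_self]
  have hzero : ∀ n, ∑ m, w n m * F n m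
      = ∑ m ∈ Finset.univ.filter (fun m : Fin (M n) => (m : ℕ) < d n), w n m := by
    intro n
    have := (Finset.sum_eq_zero_iff_of_nonneg
      (fun n _ => by linarith [hineq n])).mp hslack n (Finset.mem_univ n)
    linarith
  have hFval : ∀ n m, F n m = if (m : ℕ) < d n then 1 else 0 := fun n =>
    (block_main (w n) (F n) (hstrict n) (hF0 n) (hF1 n) (hFsum n)).2 (hzero n)
  rintro ⟨n, m⟩
  rw [hfre ⟨n, m⟩]
  have := hFval n m
  rw [hF] at this
  simp only at this
  rw [this]
  split <;> simp


/-- The `n`-th diagonal block of a matrix indexed by the sigma type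
`(n : Fin (N+1)) × Fin (M n)`. -/
def blk {N : ℕ} {M : Fin (N + 1) → ℕ}
    (X : Matrix ((n : Fin (N + 1)) × Fin (M n)) ((n : Fin (N + 1)) × Fin (M n)) ℂ)
    (n : Fin (N + 1)) : Matrix (Fin (M n)) (Fin (M n)) ℂ :=
  fun a b => X ⟨n, a⟩ ⟨n, b⟩

/-- If a block-preserving unitary `U` saturates the block-wise fidelity bound
`Tr[A U ρ U†] = Σₙ Σ_{m=1}^{dₙ} w_{n,m}` for a block-diagonal density matrix
`ρ = Σ w_{n,m} |e_{n,m}⟩⟨e_{n,m}|` with strictly decreasing eigenvalues within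
each block, then `U` maps each eigenvector `e_{n,m}` with `m ≤ dₙ` into the
`+1`-eigenspace of `A`; consequently `U` also saturates the bound for any
other block-diagonal density matrix `ρ'` with the same eigenvectors and
non-increasingly ordered eigenvalues `w'`. -/
theorem saturation_of_blockwise_bound {N : ℕ} {M : Fin (N + 1) → ℕ}
    (A U : Matrix ((n : Fin (N + 1)) × Fin (M n)) ((n : Fin (N + 1)) × Fin (M n)) ℂ)
    (hAblk : ∀ i j, i.1 ≠ j.1 → A i j = 0)
    (hUblk : ∀ i j, i.1 ≠ j.1 → U i j = 0)
    (hA : A * A = A) (hAh : A.IsHermitian)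
    (hU : U ∈ Matrix.unitaryGroup ((n : Fin (N + 1)) × Fin (M n)) ℂ)
    (d : Fin (N + 1) → ℕ) (hd : ∀ n, (blk A n).rank = d n)
    (e : ((n : Fin (N + 1)) × Fin (M n)) → ((n : Fin (N + 1)) × Fin (M n)) → ℂ)
    (horth : ∀ i j, star (e i) ⬝ᵥ e j = if i = j then (1 : ℂ) else 0)
    (hblksupp : ∀ i k, k.1 ≠ i.1 → e i k = 0)
    (w : (n : Fin (N + 1)) → Fin (M n) → ℝ)
    (hstrict : ∀ n, StrictAnti (w n)) (hw0 : ∀ n m, 0 ≤ w n m)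
    (hwtr : ∑ i : (n : Fin (N + 1)) × Fin (M n), w i.1 i.2 = 1)
    (hsat : (A * (U * (∑ i, (w i.1 i.2 : ℂ) • vecMulVec (e i) (star (e i))) * Uᴴ)).trace =
      ((∑ n : Fin (N + 1),
        ∑ m ∈ Finset.univ.filter (fun m : Fin (M n) => (m : ℕ) < d n), w n m : ℝ) : ℂ)) :
    (∀ i : (n : Fin (N + 1)) × Fin (M n), (i.2 : ℕ) < d i.1 →
      A.mulVec (U.mulVec (e i)) = U.mulVec (e i)) ∧
    (∀ w' : (n : Fin (N + 1)) → Fin (M n) → ℝ,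
      (∀ n, Antitone (w' n)) → (∀ n m, 0 ≤ w' n m) →
      (A * (U * (∑ i, (w' i.1 i.2 : ℂ) • vecMulVec (e i) (star (e i))) * Uᴴ)).trace =
        ((∑ n : Fin (N + 1),
          ∑ m ∈ Finset.univ.filter (fun m : Fin (M n) => (m : ℕ) < d n), w' n m : ℝ) : ℂ)) := by
  classical
  -- unitarity facts
  have hUU : Uᴴ * U = 1 ∧ U * Uᴴ = 1 := by
    have h := Unitary.mem_iff.mp hU
    rw [Matrix.star_eq_conjTranspose] at h; exact h
  -- the matrix of eigenvectors
  set E : Matrix ((n : Fin (N + 1)) × Fin (M n)) ((n : Fin (N + 1)) × Fin (M n)) ℂ :=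
    Matrix.of fun k i => e i k with hE
  have hEE : Eᴴ * E = 1 := by
    ext i j
    have := horth i j
    simp only [dotProduct, Pi.star_apply] at this
    simpa [Matrix.mul_apply, Matrix.conjTranspose_apply, Matrix.one_apply, hE] using this
  have hVV : (U * E) * (U * E)ᴴ = 1 := by
    rw [Matrix.conjTranspose_mul, Matrix.mul_assoc, ← Matrix.mul_assoc E,
      mul_eq_one_comm.mp hEE, Matrix.one_mul, hUU.2]
  have hva : ∀ (i : (n : Fin (N + 1)) × Fin (M n)) a, (U *ᵥ e i) a = (U * E) a i := by
    intro i a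
    simp [Matrix.mul_apply, Matrix.mulVec, dotProduct, hE]
  have hcomplete : ∀ a b, ∑ i : (n : Fin (N + 1)) × Fin (M n),
      (U *ᵥ e i) b * star ((U *ᵥ e i) a) = if b = a then (1 : ℂ) else 0 := by
    intro a b
    have h := congrFun (congrFun hVV b) a
    simp only [Matrix.mul_apply, Matrix.conjTranspose_apply, Matrix.one_apply] at h
    calc ∑ i : (n : Fin (N + 1)) × Fin (M n), (U *ᵥ e i) b * star ((U *ᵥ e i) a)
        = ∑ i, (U * E) b i * star ((U * E) a i) := by
          exact Finset.sum_congr rfl fun i _ => by rw [hva, hva]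
      _ = if b = a then 1 else 0 := h
  have hvsupp : ∀ (i : (n : Fin (N + 1)) × Fin (M n)) a, a.1 ≠ i.1 → (U *ᵥ e i) a = 0 := by
    intro i a ha
    simp only [Matrix.mulVec, dotProduct]
    apply Finset.sum_eq_zero
    intro k _
    by_cases hk : k.1 = i.1
    · rw [hUblk a k (by rw [hk]; exact ha), zero_mul]
    · rw [hblksupp i k hk, mul_zero]
  -- projection facts
  have hproj : ∀ (P : Matrix ((n : Fin (N + 1)) × Fin (M n)) ((n : Fin (N + 1)) × Fin (M n)) ℂ),
      P * P = P → P.IsHermitian → ∀ x,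
      star x ⬝ᵥ (P *ᵥ x) = star (P *ᵥ x) ⬝ᵥ (P *ᵥ x) := by
    intro P hP2 hPh x
    have h1 : star x ⬝ᵥ (P *ᵥ x) = (star x ᵥ* P) ⬝ᵥ x := Matrix.dotProduct_mulVec _ _ _
    have h2 : star (P *ᵥ x) ⬝ᵥ (P *ᵥ x) = (star x ᵥ* (Pᴴ * P)) ⬝ᵥ x := by
      rw [Matrix.star_mulVec, Matrix.dotProduct_mulVec, Matrix.vecMul_vecMul]
    rw [h1, h2, show Pᴴ = P from hPh, hP2]
  have hnorm : ∀ i : (n : Fin (N + 1)) × Fin (M n), star (U *ᵥ e i) ⬝ᵥ (U *ᵥ e i) = 1 := by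
    intro i
    rw [Matrix.star_mulVec, Matrix.dotProduct_mulVec, Matrix.vecMul_vecMul, hUU.1,
      Matrix.vecMul_one]
    simpa using horth i i
  have hBproj : (1 - A) * (1 - A) = 1 - A := by
    rw [sub_mul, one_mul, mul_sub, mul_one, hA, sub_self, sub_zero]
  have hBh : (1 - A).IsHermitian := by
    show (1 - A)ᴴ = 1 - A
    rw [Matrix.conjTranspose_sub, Matrix.conjTranspose_one, show Aᴴ = A from hAh]
  have hf0 : ∀ i : (n : Fin (N + 1)) × Fin (M n),
      0 ≤ star (U *ᵥ e i) ⬝ᵥ (A *ᵥ (U *ᵥ e i)) := by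
    intro i
    rw [hproj A hA hAh]
    exact dotProduct_star_self_nonneg _
  have hfg : ∀ i : (n : Fin (N + 1)) × Fin (M n),
      star (U *ᵥ e i) ⬝ᵥ (A *ᵥ (U *ᵥ e i)) + star (U *ᵥ e i) ⬝ᵥ ((1 - A) *ᵥ (U *ᵥ e i)) = 1 := by
    intro i
    rw [← dotProduct_add, ← Matrix.add_mulVec, add_sub_cancel, Matrix.one_mulVec]
    exact hnorm i
  have hf1 : ∀ i : (n : Fin (N + 1)) × Fin (M n),
      (star (U *ᵥ e i) ⬝ᵥ (A *ᵥ (U *ᵥ e i))).re ≤ 1 := by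
    intro i
    have hg0 : 0 ≤ star (U *ᵥ e i) ⬝ᵥ ((1 - A) *ᵥ (U *ᵥ e i)) := by
      rw [hproj (1 - A) hBproj hBh]
      exact dotProduct_star_self_nonneg _
    have := congrArg Complex.re (hfg i)
    simp only [Complex.add_re, Complex.one_re] at this
    have := (Complex.nonneg_iff.mp hg0).1
    linarith
  -- blk facts
  have hblk2 : ∀ n, blk A n * blk A n = blk A n := by
    intro n
    ext a b
    have h1 : ∑ k : (n : Fin (N + 1)) × Fin (M n), A ⟨n, a⟩ k * A k ⟨n, b⟩
        = ∑ c : Fin (M n), A ⟨n, a⟩ ⟨n, c⟩ * A ⟨n, c⟩ ⟨n, b⟩ :=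
      sum_sigma_eq_block (fun k => A ⟨n, a⟩ k * A k ⟨n, b⟩) n
        (fun k hk => by beta_reduce; rw [hAblk ⟨n, a⟩ k (Ne.symm hk), zero_mul])
    have h2 : (A * A) ⟨n, a⟩ ⟨n, b⟩ = A ⟨n, a⟩ ⟨n, b⟩ := by rw [hA]
    rw [Matrix.mul_apply] at h2
    show ∑ c, A ⟨n, a⟩ ⟨n, c⟩ * A ⟨n, c⟩ ⟨n, b⟩ = A ⟨n, a⟩ ⟨n, b⟩
    rw [← h1, h2]
  have hblkh : ∀ n, (blk A n).IsHermitian := by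
    intro n
    show (blk A n)ᴴ = blk A n
    ext a b
    show star (A ⟨n, b⟩ ⟨n, a⟩) = A ⟨n, a⟩ ⟨n, b⟩
    have := congrFun (congrFun (hAh : Aᴴ = A) ⟨n, a⟩) ⟨n, b⟩
    exact this
  -- the block sum identity
  have hfsum : ∀ n, ∑ m : Fin (M n),
      star (U *ᵥ e ⟨n, m⟩) ⬝ᵥ (A *ᵥ (U *ᵥ e ⟨n, m⟩)) = (d n : ℂ) := by
    intro n
    have hT : ∀ a b : (n : Fin (N + 1)) × Fin (M n), a.1 = n → b.1 = n →
        ∑ m : Fin (M n), (U *ᵥ e ⟨n, m⟩) b * star ((U *ᵥ e ⟨n, m⟩) a)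
          = if b = a then (1 : ℂ) else 0 := by
      intro a b han hbn
      rw [← hcomplete a b]
      exact (sum_sigma_eq_block (fun i => (U *ᵥ e i) b * star ((U *ᵥ e i) a)) n
        (fun i hi => by beta_reduce; rw [hvsupp i b (by rw [hbn]; exact (Ne.symm hi)), zero_mul])).symm
    have hAT : ∀ a b : (n : Fin (N + 1)) × Fin (M n),
        A a b * (∑ m : Fin (M n), (U *ᵥ e ⟨n, m⟩) b * star ((U *ᵥ e ⟨n, m⟩) a))
          = if a = b ∧ a.1 = n then A a b else 0 := by
      intro a b
      by_cases hab : a.1 = b.1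
      · by_cases han : a.1 = n
        · have hbn : b.1 = n := hab ▸ han
          rw [hT a b han hbn]
          by_cases h : b = a
          · subst h; simp [han]
          · rw [if_neg h, mul_zero, if_neg (fun hh => h hh.1.symm)]
        · have hz : ∑ m : Fin (M n), (U *ᵥ e ⟨n, m⟩) b * star ((U *ᵥ e ⟨n, m⟩) a) = 0 :=
            Finset.sum_eq_zero fun m _ => by
              beta_reduce
              rw [hvsupp ⟨n, m⟩ a (fun h => han h), star_zero, mul_zero]
          rw [hz, mul_zero, if_neg (fun hh => han hh.2)]
      · rw [hAblk a b hab, zero_mul, if_neg (fun hh => hab (by rw [hh.1]))]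
    calc ∑ m : Fin (M n), star (U *ᵥ e ⟨n, m⟩) ⬝ᵥ (A *ᵥ (U *ᵥ e ⟨n, m⟩))
        = ∑ m : Fin (M n), ∑ a, ∑ b,
            star ((U *ᵥ e ⟨n, m⟩) a) * (A a b * (U *ᵥ e ⟨n, m⟩) b) := by
          refine Finset.sum_congr rfl fun m _ => ?_
          simp only [dotProduct, Matrix.mulVec, Pi.star_apply, Finset.mul_sum]
      _ = ∑ a, ∑ b, A a b * (∑ m : Fin (M n),
            (U *ᵥ e ⟨n, m⟩) b * star ((U *ᵥ e ⟨n, m⟩) a)) := by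
          rw [Finset.sum_comm]
          refine Finset.sum_congr rfl fun a _ => ?_
          rw [Finset.sum_comm]
          refine Finset.sum_congr rfl fun b _ => ?_
          rw [Finset.mul_sum]
          refine Finset.sum_congr rfl fun m _ => by ring
      _ = ∑ a : (n : Fin (N + 1)) × Fin (M n), (if a.1 = n then A a a else 0) := by
          refine Finset.sum_congr rfl fun a _ => ?_
          rw [Finset.sum_congr rfl fun b _ => hAT a b]
          rw [Finset.sum_eq_single_of_mem a (Finset.mem_univ a)
            (fun b _ hb => if_neg (fun hh => hb hh.1.symm))]
          by_cases han : a.1 = n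
          · rw [if_pos ⟨rfl, han⟩, if_pos han]
          · rw [if_neg (fun hh => han hh.2), if_neg han]
      _ = ∑ m : Fin (M n), A ⟨n, m⟩ ⟨n, m⟩ := by
          rw [sum_sigma_eq_block (fun a => if a.1 = n then A a a else 0) n
            (fun a ha => by beta_reduce; exact if_neg ha)]
          exact Finset.sum_congr rfl fun m _ => if_pos rfl
      _ = (blk A n).trace := by
          simp [Matrix.trace, Matrix.diag, blk]
      _ = (d n : ℂ) := by
          rw [trace_proj_eq_rank _ (hblk2 n) (hblkh n), hd n]
  -- rewrite the saturation hypothesis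
  rw [trace_formula] at hsat
  have hfval := fidelity_core d
    (fun i => star (U *ᵥ e i) ⬝ᵥ (A *ᵥ (U *ᵥ e i))) w hstrict hf0 hf1 hfsum hsat
  constructor
  · intro i hi
    have hfi : star (U *ᵥ e i) ⬝ᵥ (A *ᵥ (U *ᵥ e i)) = 1 := by
      have := hfval i
      rw [this, if_pos hi]
    have hx1 : star (U *ᵥ e i) ⬝ᵥ (U *ᵥ e i) = 1 := hnorm i
    have hyy : star (A *ᵥ (U *ᵥ e i)) ⬝ᵥ (A *ᵥ (U *ᵥ e i)) = 1 := by
      rw [← hproj A hA hAh]; exact hfi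
    have hyx : star (A *ᵥ (U *ᵥ e i)) ⬝ᵥ (U *ᵥ e i) = 1 := by
      rw [Matrix.star_mulVec, show Aᴴ = A from hAh, ← Matrix.dotProduct_mulVec]
      exact hfi
    have hz : star ((U *ᵥ e i) - A *ᵥ (U *ᵥ e i)) ⬝ᵥ ((U *ᵥ e i) - A *ᵥ (U *ᵥ e i)) = 0 := by
      rw [star_sub, sub_dotProduct, dotProduct_sub, dotProduct_sub,
        hx1, hfi, hyx, hyy]
      ring
    have := dotProduct_star_self_eq_zero.mp hz
    exact (sub_eq_zero.mp this).symm
  · intro w' _ _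
    rw [trace_formula]
    calc ∑ i : (n : Fin (N + 1)) × Fin (M n),
          (w' i.1 i.2 : ℂ) * (star (U *ᵥ e i) ⬝ᵥ (A *ᵥ (U *ᵥ e i)))
        = ∑ i : (n : Fin (N + 1)) × Fin (M n),
            (if (i.2 : ℕ) < d i.1 then (w' i.1 i.2 : ℂ) else 0) := by
          refine Finset.sum_congr rfl fun i _ => ?_
          have := hfval i
          rw [this]
          split <;> simp
      _ = ((∑ n : Fin (N + 1),
            ∑ m ∈ Finset.univ.filter (fun m : Fin (M n) => (m : ℕ) < d n), w' n m : ℝ) : ℂ) := by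
          rw [← Finset.univ_sigma_univ, Finset.sum_sigma]
          push_cast
          refine Finset.sum_congr rfl fun n _ => ?_
          rw [Finset.sum_filter]
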